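/- arXiv:2205.13823 — 3 statements merged into one kernel-verified Lean document; each statement's English description precedes it below -/
import Mathlib

section
/- Let (X, μ) be a measure space, ε > 0, and let f, g₁, …, gₙ be nonnegative integrable functions on X with ∑_{k=1}^n ‖f − g_k‖_{L¹} < ε and ‖f‖_{L¹} = 1. Then there exists t > 0 such that ∑_{k=1}^n μ({f > t} Δ {g_k > t}) < ε · μ({f > t}), where Δ denotes symmetric difference. -/
open MeasureTheory Finset
open scoped ENNReal symmDiff

lemma symmDiff_lintegral_aux {X : Type*} [MeasurableSpace X] (μ : Measure X)
    (f g : X → ℝ) (hf0 : ∀ x, 0 ≤ f x) (hg0 : ∀ x, 0 ≤ g x)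
    (hfint : Integrable f μ) (hgint : Integrable g μ) :
    ∃ F : ℝ → ENNReal, Measurable F ∧
      (∀ t, 0 < t → μ (symmDiff {x | t < f x} {x | t < g x}) = F t) ∧
      ∫⁻ t in Set.Ioi 0, F t = ENNReal.ofReal (∫ x, |f x - g x| ∂μ) := by
  set m : X → ℝ := fun x => min (f x) (g x) with hm
  have hmint : Integrable m μ := hfint.inf hgint
  have hm0 : ∀ x, 0 ≤ m x := fun x => le_min (hf0 x) (hg0 x)
  set A : ℝ → Set X := fun t => {x | t < f x} with hA
  set B : ℝ → Set X := fun t => {x | t < g x} with hB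
  set C : ℝ → Set X := fun t => {x | t < m x} with hC
  have hCAB : ∀ t, C t = A t ∩ B t := by
    intro t; ext x; simp [hA, hB, hC, hm, lt_min_iff]
  have antiA : Antitone fun t => μ (A t) :=
    fun s t hst => measure_mono (fun x hx => lt_of_le_of_lt hst hx)
  have antiB : Antitone fun t => μ (B t) :=
    fun s t hst => measure_mono (fun x hx => lt_of_le_of_lt hst hx)
  have antiC : Antitone fun t => μ (C t) :=
    fun s t hst => measure_mono (fun x hx => lt_of_le_of_lt hst hx)
  have measA : Measurable fun t => μ (A t) := antiA.measurable
  have measB : Measurable fun t => μ (B t) := antiB.measurable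
  have measC : Measurable fun t => μ (C t) := antiC.measurable
  -- the measurable representative
  refine ⟨fun t => (μ (A t) + μ (B t)) - (μ (C t) + μ (C t)),
    (measA.add measB).sub (measC.add measC), ?_, ?_⟩
  · -- pointwise identity for t > 0
    intro t ht
    have hnB : NullMeasurableSet (B t) μ :=
      nullMeasurableSet_lt aemeasurable_const hgint.aemeasurable
    have key : μ (symmDiff (A t) (B t)) + (μ (C t) + μ (C t)) = μ (A t) + μ (B t) := by
      have h1 : μ (symmDiff (A t) (B t)) + μ (C t) = μ (A t ∪ B t) := by
        rw [hCAB]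
        have hd : AEDisjoint μ (symmDiff (A t) (B t)) (A t ∩ B t) :=
          Disjoint.aedisjoint (by
            simp [Set.disjoint_left, symmDiff_def]
            tauto)
        have hu : symmDiff (A t) (B t) ∪ (A t ∩ B t) = A t ∪ B t := by
          rw [symmDiff_def]; ext x; simp; tauto
        rw [← hu]
        exact (measure_union₀ ((hnB.inter
          (nullMeasurableSet_lt aemeasurable_const hfint.aemeasurable : NullMeasurableSet (A t) μ)).congr
            (by rw [Set.inter_comm]; exact Filter.EventuallyEq.rfl)) hd).symm
      have h2 : μ (A t ∪ B t) + μ (C t) = μ (A t) + μ (B t) := by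
        rw [hCAB]; exact measure_union_add_inter₀ (A t) hnB
      calc μ (symmDiff (A t) (B t)) + (μ (C t) + μ (C t))
          = (μ (symmDiff (A t) (B t)) + μ (C t)) + μ (C t) := by ring
        _ = μ (A t ∪ B t) + μ (C t) := by rw [h1]
        _ = μ (A t) + μ (B t) := h2
    have hCfin : μ (C t) + μ (C t) ≠ ∞ := by
      have : μ (C t) < ∞ := by
        refine lt_of_le_of_lt (measure_mono ?_) (hmint.measure_ge_lt_top ht)
        exact fun x hx => show (t:ℝ) ≤ m x from le_of_lt hx
      simp [ENNReal.add_ne_top, this.ne]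
    exact ENNReal.eq_sub_of_add_eq hCfin key
  · -- the integral identity
    have layer : ∀ (h : X → ℝ), (∀ x, 0 ≤ h x) → Integrable h μ →
        ∫⁻ t in Set.Ioi 0, μ {x | t < h x} = ENNReal.ofReal (∫ x, h x ∂μ) := by
      intro h h0 hint
      rw [← lintegral_eq_lintegral_meas_lt μ (Filter.Eventually.of_forall h0)
        hint.aemeasurable,
        ← ofReal_integral_eq_lintegral_ofReal hint (Filter.Eventually.of_forall h0)]
    have hCtop : ENNReal.ofReal (∫ x, m x ∂μ) ≠ ∞ := ENNReal.ofReal_ne_top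
    have hint1 : Integrable (fun x => |f x - g x|) μ := (hfint.sub hgint).abs
    have hint2 : Integrable (fun x => m x + m x) μ := hmint.add hmint
    have habs : ∫ x, |f x - g x| ∂μ + (∫ x, m x ∂μ + ∫ x, m x ∂μ) 
        = ∫ x, f x ∂μ + ∫ x, g x ∂μ := by
      have e2 : ∫ x, m x ∂μ + ∫ x, m x ∂μ = ∫ x, (m x + m x) ∂μ :=
        (integral_add hmint hmint).symm
      rw [e2, ← integral_add hint1 hint2, ← integral_add hfint hgint]
      refine integral_congr_ae (Filter.Eventually.of_forall fun x => ?_)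
      show |f x - g x| + (m x + m x) = f x + g x
      have hmx : m x = min (f x) (g x) := rfl
      rcases le_total (f x) (g x) with h | h
      · rw [abs_of_nonpos (by linarith), hmx, min_eq_left h]; ring
      · rw [abs_of_nonneg (by linarith), hmx, min_eq_right h]; ring
    have key : (∫⁻ t in Set.Ioi 0, ((μ (A t) + μ (B t)) - (μ (C t) + μ (C t))))
        + (ENNReal.ofReal (∫ x, m x ∂μ) + ENNReal.ofReal (∫ x, m x ∂μ))
        = ENNReal.ofReal (∫ x, f x ∂μ) + ENNReal.ofReal (∫ x, g x ∂μ) := by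
      rw [← layer m hm0 hmint, ← lintegral_add_right _ measC,
        ← lintegral_add_right _ (show Measurable fun t => μ (C t) + μ (C t) from measC.add measC)]
      rw [← layer f hf0 hfint, ← layer g hg0 hgint, ← lintegral_add_right _ measB]
      refine setLIntegral_congr_fun measurableSet_Ioi
        (fun t ht => ?_)
      have hCfin : μ (C t) + μ (C t) ≠ ∞ := by
        have : μ (C t) < ∞ := by
          refine lt_of_le_of_lt (measure_mono ?_) (hmint.measure_ge_lt_top ht)
          exact fun x hx => show (t:ℝ) ≤ m x from le_of_lt hx
        simp [ENNReal.add_ne_top, this.ne]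
      have hle : μ (C t) + μ (C t) ≤ μ (A t) + μ (B t) := by
        refine add_le_add (measure_mono ?_) (measure_mono ?_) <;>
          (rw [hCAB]; simp [Set.inter_subset_left, Set.inter_subset_right])
      rw [tsub_add_cancel_of_le hle]
    have key2 : ENNReal.ofReal (∫ x, |f x - g x| ∂μ)
        + (ENNReal.ofReal (∫ x, m x ∂μ) + ENNReal.ofReal (∫ x, m x ∂μ))
        = ENNReal.ofReal (∫ x, f x ∂μ) + ENNReal.ofReal (∫ x, g x ∂μ) := by
      rw [← ENNReal.ofReal_add (integral_nonneg hm0) (integral_nonneg hm0),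
        ← ENNReal.ofReal_add (integral_nonneg (fun x => abs_nonneg _))
          (add_nonneg (integral_nonneg hm0) (integral_nonneg hm0)), habs,
        ENNReal.ofReal_add (integral_nonneg hf0) (integral_nonneg hg0)]
    exact WithTop.add_right_cancel (ENNReal.add_ne_top.mpr ⟨ENNReal.ofReal_ne_top, ENNReal.ofReal_ne_top⟩) (key.trans key2.symm)

/-- If `f, g₁, …, gₙ` are nonnegative integrable functions with `∑ ‖f − gₖ‖₁ < ε` and
`‖f‖₁ = 1`, then there is `t > 0` with `∑ μ({f > t} Δ {gₖ > t}) < ε · μ({f > t})`. -/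
theorem superlevel_symmDiff_estimate {X : Type*} [MeasurableSpace X] (μ : Measure X)
    (ε : ℝ) (hε : 0 < ε) (n : ℕ) (f : X → ℝ) (g : Fin n → X → ℝ)
    (hf0 : ∀ x, 0 ≤ f x) (hg0 : ∀ k x, 0 ≤ g k x)
    (hfint : Integrable f μ) (hgint : ∀ k, Integrable (g k) μ)
    (hsum : ∑ k, ∫ x, |f x - g k x| ∂μ < ε)
    (hnorm : ∫ x, f x ∂μ = 1) :
    ∃ t : ℝ, 0 < t ∧
      (∑ k, μ (symmDiff {x | t < f x} {x | t < g k x}))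
        < ENNReal.ofReal ε * μ {x | t < f x} := by
  by_contra hcon
  push_neg at hcon
  choose F hFmeas hFeq hFint using fun k =>
    symmDiff_lintegral_aux μ f (g k) hf0 (hg0 k) hfint (hgint k)
  have layerf : ∫⁻ t in Set.Ioi 0, μ {x | t < f x} = 1 := by
    rw [← lintegral_eq_lintegral_meas_lt μ (Filter.Eventually.of_forall hf0)
      hfint.aemeasurable,
      ← ofReal_integral_eq_lintegral_ofReal hfint (Filter.Eventually.of_forall hf0),
      hnorm, ENNReal.ofReal_one]
  have key : ENNReal.ofReal ε ≤ ENNReal.ofReal (∑ k, ∫ x, |f x - g k x| ∂μ) := by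
    calc ENNReal.ofReal ε
        = ENNReal.ofReal ε * ∫⁻ t in Set.Ioi 0, μ {x | t < f x} := by
          rw [layerf, mul_one]
      _ = ∫⁻ t in Set.Ioi 0, ENNReal.ofReal ε * μ {x | t < f x} :=
          (lintegral_const_mul' _ _ ENNReal.ofReal_ne_top).symm
      _ ≤ ∫⁻ t in Set.Ioi 0, ∑ k, μ (symmDiff {x | t < f x} {x | t < g k x}) :=
          setLIntegral_mono' measurableSet_Ioi (fun t ht => hcon t ht)
      _ = ∫⁻ t in Set.Ioi 0, ∑ k, F k t := by
          refine setLIntegral_congr_fun measurableSet_Ioi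
            (fun t ht => ?_)
          exact Finset.sum_congr rfl fun k _ => hFeq k t ht
      _ = ∑ k, ∫⁻ t in Set.Ioi 0, F k t :=
          lintegral_finset_sum _ (fun k _ => hFmeas k)
      _ = ∑ k, ENNReal.ofReal (∫ x, |f x - g k x| ∂μ) :=
          Finset.sum_congr rfl fun k _ => hFint k
      _ = ENNReal.ofReal (∑ k, ∫ x, |f x - g k x| ∂μ) :=
          (ENNReal.ofReal_sum_of_nonneg fun k _ =>
            integral_nonneg fun x => abs_nonneg _).symm
  have hlt : ENNReal.ofReal (∑ k, ∫ x, |f x - g k x| ∂μ) < ENNReal.ofReal ε :=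
    (ENNReal.ofReal_lt_ofReal_iff hε).mpr hsum
  exact absurd key (not_le.mpr hlt)
end

section
/- Let G be a unimodular locally compact group with Haar measure μ. Suppose there exists a net (f_j) of nonnegative functions in L¹(G) with ∫_G f_j dμ = 1 such that for every s ∈ G, ‖f_j − inner_s f_j‖₁ → 0, where (inner_s f)(t) = f(s⁻¹ t s). Then G is inner amenable: there exists a state m on L∞(G) with m(inner_s f) = m(f) for all s ∈ G and f ∈ L∞(G). -/
open MeasureTheory Filter
open scoped ENNReal NNReal

/-- If a unimodular locally compact group `G` admits a net `(f_j)` of nonnegative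
normalized `L¹` functions that is asymptotically central, i.e.
`‖f_j − inner_s f_j‖₁ → 0` for all `s`, then `G` is inner amenable: there is a
state `m` on `L∞(G)` with `m(inner_s f) = m(f)` for all `s ∈ G`. -/
theorem inner_amenable_of_asymptotically_central_net
    {G : Type*} [Group G] [TopologicalSpace G] [IsTopologicalGroup G]
    [LocallyCompactSpace G] [MeasurableSpace G] [BorelSpace G]
    (μ : Measure G) [μ.IsHaarMeasure] [μ.IsMulRightInvariant]
    {ι : Type*} (l : Filter ι) [l.NeBot] (f : ι → G → ℝ)
    (hpos : ∀ j x, 0 ≤ f j x) (hint : ∀ j, Integrable (f j) μ)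
    (hnorm : ∀ j, ∫ x, f j x ∂μ = 1)
    (hcentral : ∀ s : G,
      Tendsto (fun j => ∫ t, |f j t - f j (s⁻¹ * t * s)| ∂μ) l (nhds 0)) :
    ∃ m : Lp ℝ ⊤ μ →ₗ[ℝ] ℝ,
      (∀ h : Lp ℝ ⊤ μ, 0 ≤ᵐ[μ] (h : G → ℝ) → 0 ≤ m h) ∧
      m ((memLp_top_const (1 : ℝ)).toLp (fun _ => (1 : ℝ))) = 1 ∧
      (∀ s : G, ∀ h h' : Lp ℝ ⊤ μ,
        (h' : G → ℝ) =ᵐ[μ] (fun t => (h : G → ℝ) (s⁻¹ * t * s)) → m h' = m h) := by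
  classical
  let U : Ultrafilter ι := Ultrafilter.of l
  have hUl : (U : Filter ι) ≤ l := Ultrafilter.of_le l
  -- essential sup bound
  set C : Lp ℝ ⊤ μ → ℝ := fun h => (eLpNormEssSup (h : G → ℝ) μ).toReal with hCdef
  have hC0 : ∀ h, 0 ≤ C h := fun h => ENNReal.toReal_nonneg
  have hbd : ∀ h : Lp ℝ ⊤ μ, ∀ᵐ x ∂μ, ‖(h : G → ℝ) x‖ ≤ C h := by
    intro h
    have hfin : eLpNormEssSup (h : G → ℝ) μ ≠ ⊤ := by
      have := Lp.eLpNorm_lt_top h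
      rw [eLpNorm_exponent_top] at this
      exact this.ne
    filter_upwards [ae_le_eLpNormEssSup (f := (h : G → ℝ)) (μ := μ)] with x hx
    have : ((‖(h : G → ℝ) x‖₊ : ℝ≥0∞)).toReal ≤ (eLpNormEssSup (h : G → ℝ) μ).toReal :=
      ENNReal.toReal_mono hfin hx
    simpa using this
  -- the net of functionals
  set φ : Lp ℝ ⊤ μ → ι → ℝ := fun h j => ∫ t, f j t * (h : G → ℝ) t ∂μ with hφdef
  have hI : ∀ (h : Lp ℝ ⊤ μ) (g : G → ℝ), Integrable g μ →
      Integrable (fun t => g t * (h : G → ℝ) t) μ := by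
    intro h g hg
    have := hg.bdd_mul (Lp.aestronglyMeasurable h) (hbd h)
    simpa [mul_comm] using this
  have hIf : ∀ (h : Lp ℝ ⊤ μ) j, Integrable (fun t => f j t * (h : G → ℝ) t) μ :=
    fun h j => hI h _ (hint j)
  have hφbd : ∀ h j, |φ h j| ≤ C h := by
    intro h j
    have h1 : |φ h j| ≤ ∫ t, |f j t * (h : G → ℝ) t| ∂μ := by
      have := norm_integral_le_integral_norm (fun t => f j t * (h : G → ℝ) t) (μ := μ)
      simp only [Real.norm_eq_abs] at this
      exact this
    have h2 : ∫ t, |f j t * (h : G → ℝ) t| ∂μ ≤ ∫ t, f j t * C h ∂μ := by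
      refine integral_mono_ae (hIf h j).abs ((hint j).mul_const _) ?_
      filter_upwards [hbd h] with t ht
      rw [abs_mul, abs_of_nonneg (hpos j t)]
      exact mul_le_mul_of_nonneg_left (by simpa [Real.norm_eq_abs] using ht) (hpos j t)
    have h3 : ∫ t, f j t * C h ∂μ = C h := by
      rw [integral_mul_const, hnorm j, one_mul]
    linarith
  -- ultrafilter limits exist
  have hex : ∀ h, ∃ x, Tendsto (φ h) (U : Filter ι) (nhds x) := by
    intro h
    have hle : (U.map (φ h) : Filter ℝ) ≤ Filter.principal (Set.Icc (-(C h)) (C h)) := by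
      refine le_principal_iff.2 (mem_map.2 (univ_mem' fun j => ?_))
      exact Set.mem_Icc.2 (abs_le.1 (hφbd h j))
    obtain ⟨x, -, hx⟩ :=
      (isCompact_Icc (a := -(C h)) (b := C h)).ultrafilter_le_nhds (U.map (φ h)) hle
    exact ⟨x, hx⟩
  choose mval hmval using hex
  -- additivity
  have hadd : ∀ h h' : Lp ℝ ⊤ μ, mval (h + h') = mval h + mval h' := by
    intro h h'
    have h1 : ∀ j, φ (h + h') j = φ h j + φ h' j := by
      intro j
      have e1 : φ (h + h') j
          = ∫ t, (f j t * (h : G → ℝ) t + f j t * (h' : G → ℝ) t) ∂μ := by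
        refine integral_congr_ae ?_
        filter_upwards [Lp.coeFn_add h h'] with t ht
        rw [ht]
        simp [mul_add]
      rw [e1, integral_add (hIf h j) (hIf h' j)]
    refine tendsto_nhds_unique (hmval (h + h')) ?_
    have : φ (h + h') = fun j => φ h j + φ h' j := funext h1
    rw [this]
    exact (hmval h).add (hmval h')
  -- homogeneity
  have hsmul : ∀ (c : ℝ) (h : Lp ℝ ⊤ μ), mval (c • h) = c * mval h := by
    intro c h
    have h1 : ∀ j, φ (c • h) j = c * φ h j := by
      intro j
      have e1 : φ (c • h) j = ∫ t, c * (f j t * (h : G → ℝ) t) ∂μ := by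
        refine integral_congr_ae ?_
        filter_upwards [Lp.coeFn_smul c h] with t ht
        rw [ht]
        simp only [Pi.smul_apply, smul_eq_mul]
        ring
      rw [e1, integral_const_mul]
    refine tendsto_nhds_unique (hmval (c • h)) ?_
    have : φ (c • h) = fun j => c * φ h j := funext h1
    rw [this]
    exact (hmval h).const_mul c
  refine ⟨{ toFun := mval, map_add' := hadd, map_smul' := hsmul }, ?_, ?_, ?_⟩
  · -- positivity
    intro h hh
    refine ge_of_tendsto (hmval h) (Eventually.of_forall fun j => ?_)
    refine integral_nonneg_of_ae ?_
    filter_upwards [hh] with t ht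
    exact mul_nonneg (hpos j t) ht
  · -- normalization
    show mval _ = 1
    refine tendsto_nhds_unique (hmval _) ?_
    have h1 : ∀ j, φ ((memLp_top_const (1 : ℝ)).toLp (fun _ => (1 : ℝ))) j = 1 := by
      intro j
      have e1 : φ ((memLp_top_const (1 : ℝ)).toLp (fun _ => (1 : ℝ))) j
          = ∫ t, f j t ∂μ := by
        refine integral_congr_ae ?_
        filter_upwards [MemLp.coeFn_toLp (memLp_top_const (1 : ℝ) (μ := μ))] with t ht
        rw [ht]
        simp
      rw [e1, hnorm j]
    have : φ ((memLp_top_const (1 : ℝ)).toLp (fun _ => (1 : ℝ))) = fun _ => 1 := funext h1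
    rw [this]
    exact tendsto_const_nhds
  · -- inner invariance
    intro s h h' hhh'
    show mval h' = mval h
    -- measure preserving conjugation
    set e : G ≃ᵐ G := (MeasurableEquiv.mulLeft s⁻¹).trans (MeasurableEquiv.mulRight s) with he
    have hemp : MeasurePreserving e μ μ := by
      have := (measurePreserving_mul_right μ s).comp (measurePreserving_mul_left μ s⁻¹)
      have he2 : ⇑e = fun t => s⁻¹ * t * s := by
        funext t; simp [he, MeasurableEquiv.mulLeft, MeasurableEquiv.mulRight]
      rw [he2]
      simpa [Function.comp_def] using this
    have hgint : ∀ j, Integrable (fun u => f j (s * u * s⁻¹)) μ := by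
      intro j
      have hmp2 : MeasurePreserving (fun u => s * u * s⁻¹) μ μ := by
        have := (measurePreserving_mul_right μ s⁻¹).comp (measurePreserving_mul_left μ s)
        simpa [Function.comp_def] using this
      exact (hmp2.integrable_comp (hint j).aestronglyMeasurable).2 (hint j)
    have hstep : ∀ j, φ h' j = ∫ u, f j (s * u * s⁻¹) * (h : G → ℝ) u ∂μ := by
      intro j
      have e1 : φ h' j = ∫ t, f j t * (h : G → ℝ) (s⁻¹ * t * s) ∂μ := by
        refine integral_congr_ae ?_
        filter_upwards [hhh'] with t ht
        rw [ht]
      have e2 := MeasurePreserving.integral_comp' (f := e) hemp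
        (fun u => f j (s * u * s⁻¹) * (h : G → ℝ) u)
      rw [e1, ← e2]
      refine integral_congr_ae (Eventually.of_forall fun t => ?_)
      dsimp only
      have het : e t = s⁻¹ * t * s := by
        simp [he, MeasurableEquiv.mulLeft, MeasurableEquiv.mulRight]
      rw [het]
      have key : s * (s⁻¹ * t * s) * s⁻¹ = t := by group
      rw [key]
    -- difference bound
    set D : ι → ℝ := fun j => ∫ u, |f j (s * u * s⁻¹) - f j u| ∂μ with hDdef
    have hD : Tendsto D l (nhds 0) := by
      have h0 := hcentral s⁻¹
      simp only [inv_inv] at h0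
      refine h0.congr fun j => ?_
      refine integral_congr_ae (Eventually.of_forall fun u => ?_)
      dsimp only
      rw [abs_sub_comm]
    have hdiffeq : ∀ j, φ h' j - φ h j
        = ∫ u, (f j (s * u * s⁻¹) - f j u) * (h : G → ℝ) u ∂μ := by
      intro j
      rw [hstep j, hφdef, ← integral_sub (hI h _ (hgint j)) (hIf h j)]
      refine integral_congr_ae (Eventually.of_forall fun u => ?_)
      ring
    have hbnd : ∀ j, |φ h' j - φ h j| ≤ D j * C h := by
      intro j
      rw [hdiffeq j]
      have hdint : Integrable (fun u => f j (s * u * s⁻¹) - f j u) μ :=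
        (hgint j).sub (hint j)
      have h1 : |∫ u, (f j (s * u * s⁻¹) - f j u) * (h : G → ℝ) u ∂μ|
          ≤ ∫ u, |(f j (s * u * s⁻¹) - f j u) * (h : G → ℝ) u| ∂μ := by
        have := norm_integral_le_integral_norm
            (fun u => (f j (s * u * s⁻¹) - f j u) * (h : G → ℝ) u) (μ := μ)
        simp only [Real.norm_eq_abs] at this
        exact this
      have h2 : ∫ u, |(f j (s * u * s⁻¹) - f j u) * (h : G → ℝ) u| ∂μ
          ≤ ∫ u, |f j (s * u * s⁻¹) - f j u| * C h ∂μ := by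
        refine integral_mono_ae (hI h _ hdint).abs (hdint.abs.mul_const _) ?_
        filter_upwards [hbd h] with u hu
        rw [abs_mul]
        exact mul_le_mul_of_nonneg_left (by simpa [Real.norm_eq_abs] using hu) (abs_nonneg _)
      have h3 : ∫ u, |f j (s * u * s⁻¹) - f j u| * C h ∂μ = D j * C h := by
        rw [integral_mul_const]
      linarith
    have hzero : Tendsto (fun j => φ h' j - φ h j) (U : Filter ι) (nhds 0) := by
      refine squeeze_zero_norm (a := fun j => D j * C h) (fun j => ?_) ?_
      · simpa [Real.norm_eq_abs] using hbnd j
      · have : Tendsto (fun j => D j * C h) l (nhds 0) := by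
          simpa using hD.mul_const (C h)
        exact this.mono_left hUl
    refine tendsto_nhds_unique (hmval h') ?_
    have := (hmval h).add hzero
    simpa using this
end

section
/- Let G be a locally compact group with left Haar measure μ, equipped with a left invariant metric d, and suppose there is a constant c ≥ 1 such that μ(B(e, 2r)) ≤ c · μ(B(e, r)) for all r ∈ (0, 1/2], where B(e, r) is the open ball of radius r centered at the identity. Then for every r ∈ (0, 1/2], the ball B = B(e, r) satisfies μ(B)³ ≤ c³ ∫_B μ(B ∩ sB)² dμ(s). -/
open MeasureTheory Metric
open scoped Pointwise ENNReal

/-- Let `G` be a locally compact group with left Haar measure `μ` and a left invariant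
metric whose Haar measure is doubling for small balls with constant `c`. Then for every
`r ∈ (0, 1/2]`, the ball `B = B(e, r)` satisfies
`μ(B)³ ≤ c³ ∫_B μ(B ∩ sB)² dμ(s)`. -/
theorem haar_ball_cube_le_of_doubling
    {G : Type*} [Group G] [MetricSpace G] [IsTopologicalGroup G]
    [LocallyCompactSpace G] [MeasurableSpace G] [BorelSpace G]
    (μ : Measure G) [μ.IsHaarMeasure]
    (hinv : ∀ g x y : G, dist (g * x) (g * y) = dist x y)
    (c : ℝ) (hc : 1 ≤ c)
    (hdoubling : ∀ r : ℝ, 0 < r → r ≤ 1 / 2 →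
      μ (ball (1 : G) (2 * r)) ≤ ENNReal.ofReal c * μ (ball (1 : G) r)) :
    ∀ r : ℝ, 0 < r → r ≤ 1 / 2 →
      μ (ball (1 : G) r) ^ 3 ≤
        (ENNReal.ofReal c) ^ 3 *
          ∫⁻ s in ball (1 : G) r, μ (ball (1 : G) r ∩ s • ball (1 : G) r) ^ 2 ∂μ := by
  intro r hr hr2
  set m := μ (ball (1 : G) (r / 2)) with hm
  have hhalf : 0 < r / 2 := by linarith
  have hμB : μ (ball (1 : G) r) ≤ ENNReal.ofReal c * m := by
    have := hdoubling (r / 2) hhalf (by linarith)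
    rwa [show 2 * (r / 2) = r by ring] at this
  -- key inclusion
  have hsub : ∀ s ∈ ball (1 : G) (r / 2),
      ball (1 : G) (r / 2) ⊆ ball (1 : G) r ∩ s • ball (1 : G) r := by
    intro s hs x hx
    constructor
    · exact mem_ball.2 (lt_of_lt_of_le (mem_ball.1 hx) (by linarith))
    · rw [Set.mem_smul_set_iff_inv_smul_mem]
      simp only [smul_eq_mul, mem_ball]
      have : dist (s⁻¹ * x) 1 = dist x s := by
        rw [← hinv s (s⁻¹ * x) 1, mul_inv_cancel_left, mul_one]
      rw [this]
      calc dist x s ≤ dist x 1 + dist 1 s := dist_triangle _ _ _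
        _ < r / 2 + r / 2 := by
            have := mem_ball.1 hx
            have := mem_ball.1 hs
            rw [dist_comm] at *
            linarith [mem_ball.1 hx, dist_comm (1 : G) s ▸ mem_ball.1 hs]
        _ = r := by ring
  have hmono : m ^ 2 * m ≤
      ∫⁻ s in ball (1 : G) r, μ (ball (1 : G) r ∩ s • ball (1 : G) r) ^ 2 ∂μ := by
    calc m ^ 2 * m = ∫⁻ _ in ball (1 : G) (r / 2), m ^ 2 ∂μ := by
          rw [setLIntegral_const, hm]
      _ ≤ ∫⁻ s in ball (1 : G) (r / 2),
            μ (ball (1 : G) r ∩ s • ball (1 : G) r) ^ 2 ∂μ := by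
          rw [← lintegral_indicator measurableSet_ball _,
            ← lintegral_indicator measurableSet_ball _]
          refine lintegral_mono fun s => ?_
          by_cases hs : s ∈ ball (1 : G) (r / 2)
          · simp only [Set.indicator_of_mem hs]
            exact pow_le_pow_left' (measure_mono (hsub s hs)) 2
          · simp [Set.indicator_of_notMem hs]
      _ ≤ _ := lintegral_mono_set (ball_subset_ball (by linarith))
  calc μ (ball (1 : G) r) ^ 3 ≤ (ENNReal.ofReal c * m) ^ 3 := by
        exact pow_le_pow_left' hμB 3
    _ = (ENNReal.ofReal c) ^ 3 * (m ^ 2 * m) := by ring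
    _ ≤ _ := by exact mul_le_mul_right hmono _
end
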